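/- arXiv:0710.2671 — 2 statements merged into one kernel-verified Lean document; each statement's English description precedes it below -/
import Mathlib

section
/- Let E ⊆ ℂ^m and F ⊆ ℂ^n. Then the product E × F ⊆ ℂ^m × ℂ^n = ℂ^{m+n} is non-thin at ∞ if and only if both E is non-thin at ∞ in ℂ^m and F is non-thin at ∞ in ℂ^n. -/
open Filter Metric

noncomputable section

/-- An upper semicontinuous `EReal`-valued function `u` (never `+∞`) on `U ⊆ ℂ` is
*subharmonic* on `U` if it satisfies the harmonic-polynomial maximum criterion:
whenever `u ≤ Re p` on a circle contained (with its disc) in `U`, for a complex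
polynomial `p`, then `u ≤ Re p` throughout the corresponding closed disc. -/
def SubharmonicOn' (u : ℂ → EReal) (U : Set ℂ) : Prop :=
  UpperSemicontinuousOn u U ∧ (∀ z ∈ U, u z < ⊤) ∧
  ∀ (c : ℂ) (r : ℝ), 0 < r → closedBall c r ⊆ U →
    ∀ p : Polynomial ℂ,
      (∀ z ∈ sphere c r, u z ≤ ((p.eval z).re : EReal)) →
      ∀ z ∈ closedBall c r, u z ≤ ((p.eval z).re : EReal)

/-- A function `u : ℂ^m → [-∞,∞)` is *plurisubharmonic* on `U` if it is upper
semicontinuous on `U`, nowhere `+∞` on `U`, and its restriction to every complex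
line is subharmonic. -/
def PshOn {m : ℕ} (u : EuclideanSpace ℂ (Fin m) → EReal)
    (U : Set (EuclideanSpace ℂ (Fin m))) : Prop :=
  UpperSemicontinuousOn u U ∧ (∀ z ∈ U, u z < ⊤) ∧
  ∀ (a b : EuclideanSpace ℂ (Fin m)), b ≠ 0 →
    SubharmonicOn' (fun w => u (a + w • b)) {w : ℂ | a + w • b ∈ U}

/-- The class `𝕃` of plurisubharmonic functions on `ℂ^m` of minimal growth:
`u(z) - log |z| ≤ O(1)` as `|z| → ∞`. -/
def MinGrowth {m : ℕ} (u : EuclideanSpace ℂ (Fin m) → EReal) : Prop :=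
  PshOn u Set.univ ∧ ∃ C R₀ : ℝ, ∀ z, R₀ ≤ ‖z‖ → u z ≤ ((Real.log ‖z‖ + C : ℝ) : EReal)

/-- The pluricomplex Green function (Siciak extremal function) of `E ⊆ ℂ^m`:
`V_E(z) = sup { u(z) : u ∈ 𝕃, u ≤ 0 on E }`. -/
def greenFn {m : ℕ} (E : Set (EuclideanSpace ℂ (Fin m)))
    (z : EuclideanSpace ℂ (Fin m)) : EReal :=
  sSup ((fun u => u z) '' {u | MinGrowth u ∧ ∀ x ∈ E, u x ≤ 0})

/-- The upper semicontinuous regularization `V_E*` of the Green function. -/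
def greenFnStar {m : ℕ} (E : Set (EuclideanSpace ℂ (Fin m)))
    (z : EuclideanSpace ℂ (Fin m)) : EReal :=
  Filter.limsup (greenFn E) (nhds z)

/-- `E ⊆ ℂ^m` is non-thin at `∞` if `lim_{R→∞} V_{E_R}(z) = 0` for all `z ∈ ℂ^m`,
where `E_R = E ∩ {|z| ≤ R}`. -/
def NonthinAtInfty {m : ℕ} (E : Set (EuclideanSpace ℂ (Fin m))) : Prop :=
  ∀ z, Tendsto (fun R : ℝ => greenFn (E ∩ closedBall 0 R) z) atTop (nhds (0 : EReal))

/-- `A ⊆ ℂ^m` is pluripolar if `A ⊆ {u = -∞}` for some plurisubharmonic `u ≢ -∞` on `ℂ^m`. -/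
def Pluripolar {m : ℕ} (A : Set (EuclideanSpace ℂ (Fin m))) : Prop :=
  ∃ u : EuclideanSpace ℂ (Fin m) → EReal, PshOn u Set.univ ∧ (∃ z, u z ≠ ⊥) ∧ ∀ a ∈ A, u a = ⊥

/-- The Robin constant `γ(K) = limsup_{z→∞} [V_K*(z) - log |z|]`.  The
`ℂ^m`-capacity is `C(K) = e^{-γ(K)}`, so that `log C(K) = -γ(K)`. -/
def robinConst {m : ℕ} (K : Set (EuclideanSpace ℂ (Fin m))) : EReal :=
  Filter.limsup (fun z => greenFnStar K z - ((Real.log ‖z‖ : ℝ) : EReal))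
    (Bornology.cobounded (EuclideanSpace ℂ (Fin m)))

/-- The product `E × F ⊆ ℂ^m × ℂ^n`, viewed inside `ℂ^{m+n}` via coordinates. -/
def prodSet {m n : ℕ} (E : Set (EuclideanSpace ℂ (Fin m)))
    (F : Set (EuclideanSpace ℂ (Fin n))) : Set (EuclideanSpace ℂ (Fin (m + n))) :=
  {z | WithLp.toLp 2 (fun i => z (Fin.castAdd n i)) ∈ E ∧ WithLp.toLp 2 (fun j => z (Fin.natAdd m j)) ∈ F}

namespace NTI

section Aux

variable {m n k N : ℕ}

def iotaP (m n : ℕ) (z : EuclideanSpace ℂ (Fin m)) (w : EuclideanSpace ℂ (Fin n)) :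
    EuclideanSpace ℂ (Fin (m + n)) :=
  WithLp.toLp 2 (fun i : Fin (m + n) => (Fin.addCases (motive := fun _ => ℂ) (fun i => z i) (fun j => w j) i : ℂ))

def proj1 (m n : ℕ) (ζ : EuclideanSpace ℂ (Fin (m + n))) : EuclideanSpace ℂ (Fin m) :=
  WithLp.toLp 2 (fun i => ζ (Fin.castAdd n i))

def proj2 (m n : ℕ) (ζ : EuclideanSpace ℂ (Fin (m + n))) : EuclideanSpace ℂ (Fin n) :=
  WithLp.toLp 2 (fun j => ζ (Fin.natAdd m j))

lemma proj1_iota (z : EuclideanSpace ℂ (Fin m)) (w : EuclideanSpace ℂ (Fin n)) :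
    proj1 m n (iotaP m n z w) = z := by
  refine PiLp.ext fun i => ?_; simp [proj1, iotaP]

lemma proj2_iota (z : EuclideanSpace ℂ (Fin m)) (w : EuclideanSpace ℂ (Fin n)) :
    proj2 m n (iotaP m n z w) = w := by
  refine PiLp.ext fun j => ?_; simp [proj2, iotaP]

lemma iota_proj (ζ : EuclideanSpace ℂ (Fin (m + n))) :
    iotaP m n (proj1 m n ζ) (proj2 m n ζ) = ζ := by
  refine PiLp.ext fun i => ?_
  induction i using Fin.addCases with
  | left i => simp [proj1, iotaP]
  | right j => simp [proj2, iotaP]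

lemma iota_add (z z' : EuclideanSpace ℂ (Fin m)) (w w' : EuclideanSpace ℂ (Fin n)) :
    iotaP m n z w + iotaP m n z' w' = iotaP m n (z + z') (w + w') := by
  refine PiLp.ext fun i => ?_
  induction i using Fin.addCases with
  | left i => simp [iotaP]
  | right j => simp [iotaP]

lemma iota_smul (c : ℂ) (z : EuclideanSpace ℂ (Fin m)) (w : EuclideanSpace ℂ (Fin n)) :
    c • iotaP m n z w = iotaP m n (c • z) (c • w) := by
  refine PiLp.ext fun i => ?_
  induction i using Fin.addCases with
  | left i => simp [iotaP]
  | right j => simp [iotaP]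

lemma norm_iota_sq (z : EuclideanSpace ℂ (Fin m)) (w : EuclideanSpace ℂ (Fin n)) :
    ‖iotaP m n z w‖ ^ 2 = ‖z‖ ^ 2 + ‖w‖ ^ 2 := by
  have h1 : ∀ {k : ℕ} (x : EuclideanSpace ℂ (Fin k)), ‖x‖ ^ 2 = ∑ i, ‖x i‖ ^ 2 := by
    intro k x
    rw [EuclideanSpace.norm_eq, Real.sq_sqrt]
    positivity
  rw [h1, h1, h1, Fin.sum_univ_add]
  simp [iotaP]

lemma norm_proj_sq (ζ : EuclideanSpace ℂ (Fin (m + n))) :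
    ‖ζ‖ ^ 2 = ‖proj1 m n ζ‖ ^ 2 + ‖proj2 m n ζ‖ ^ 2 := by
  conv_lhs => rw [← iota_proj ζ]
  exact norm_iota_sq _ _

lemma norm_iota_le (z : EuclideanSpace ℂ (Fin m)) (w : EuclideanSpace ℂ (Fin n)) :
    ‖iotaP m n z w‖ ≤ ‖z‖ + ‖w‖ := by
  have h := norm_iota_sq z w
  nlinarith [norm_nonneg z, norm_nonneg w, norm_nonneg (iotaP m n z w)]

lemma norm_proj1_le (ζ : EuclideanSpace ℂ (Fin (m + n))) : ‖proj1 m n ζ‖ ≤ ‖ζ‖ := by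
  have h := norm_proj_sq ζ
  nlinarith [norm_nonneg (proj1 m n ζ), norm_nonneg (proj2 m n ζ), norm_nonneg ζ]

lemma norm_proj2_le (ζ : EuclideanSpace ℂ (Fin (m + n))) : ‖proj2 m n ζ‖ ≤ ‖ζ‖ := by
  have h := norm_proj_sq ζ
  nlinarith [norm_nonneg (proj1 m n ζ), norm_nonneg (proj2 m n ζ), norm_nonneg ζ]

lemma norm_iota_left (z : EuclideanSpace ℂ (Fin m)) : ‖iotaP m n z 0‖ = ‖z‖ := by
  have h := norm_iota_sq z (0 : EuclideanSpace ℂ (Fin n))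
  simp only [norm_zero] at h
  nlinarith [norm_nonneg z, norm_nonneg (iotaP m n z (0 : EuclideanSpace ℂ (Fin n)))]

lemma norm_iota_right (w : EuclideanSpace ℂ (Fin n)) : ‖iotaP m n 0 w‖ = ‖w‖ := by
  have h := norm_iota_sq (0 : EuclideanSpace ℂ (Fin m)) w
  simp only [norm_zero] at h
  nlinarith [norm_nonneg w, norm_nonneg (iotaP m n (0 : EuclideanSpace ℂ (Fin m)) w)]

lemma re_min_principle {c : ℂ} {r : ℝ} (hr : 0 < r) (p : Polynomial ℂ) {t : ℝ}
    (hb : ∀ ζ ∈ sphere c r, t ≤ (p.eval ζ).re) :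
    ∀ ζ ∈ closedBall c r, t ≤ (p.eval ζ).re := by
  intro ζ hζ
  have hd : DiffContOnCl ℂ (fun z => Complex.exp (-(p.eval z))) (ball c r) :=
    (p.differentiable.neg.cexp).diffContOnCl
  have hfr : ∀ x ∈ frontier (ball c r), ‖Complex.exp (-(p.eval x))‖ ≤ Real.exp (-t) := by
    rw [frontier_ball c hr.ne']
    intro x hx
    rw [Complex.norm_exp]
    simp only [Complex.neg_re]
    exact Real.exp_le_exp.2 (neg_le_neg (hb x hx))
  have hcl : ζ ∈ closure (ball c r) := by rwa [closure_ball c hr.ne']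
  have h2 := Complex.norm_le_of_forall_mem_frontier_norm_le isBounded_ball hd hfr hcl
  rw [Complex.norm_exp] at h2
  simp only [Complex.neg_re] at h2
  have := Real.exp_le_exp.1 h2
  linarith

lemma subharmonicOn'_const {κ : EReal} (hκ : κ < ⊤) (U : Set ℂ) :
    SubharmonicOn' (fun _ => κ) U := by
  refine ⟨upperSemicontinuousOn_const, fun _ _ => hκ, ?_⟩
  intro c r hr _ p hp z hz
  induction κ using EReal.rec with
  | bot => exact bot_le
  | coe t =>
    have hb : ∀ ζ ∈ sphere c r, t ≤ (p.eval ζ).re := fun ζ hζ => EReal.coe_le_coe_iff.1 (hp ζ hζ)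
    exact EReal.coe_le_coe_iff.2 (re_min_principle hr p hb z hz)
  | top => exact absurd hκ (lt_irrefl ⊤)

lemma ereal_sub_lt_iff {a y : EReal} {ε : ℝ} : a - (ε : EReal) < y ↔ a < y + (ε : EReal) :=
  EReal.sub_lt_iff (Or.inl (EReal.coe_ne_bot ε)) (Or.inl (EReal.coe_ne_top ε))

lemma ereal_sub_le_iff {a y : EReal} {ε : ℝ} : a - (ε : EReal) ≤ y ↔ a ≤ y + (ε : EReal) :=
  EReal.sub_le_iff_le_add (Or.inl (EReal.coe_ne_bot ε)) (Or.inl (EReal.coe_ne_top ε))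

lemma ereal_sub_lt_top {a : EReal} (ha : a < ⊤) (ε : ℝ) : a - (ε : EReal) < ⊤ := by
  rw [ereal_sub_lt_iff]
  exact ha.trans_le (by rw [EReal.top_add_coe])

lemma uscOn_sub_const {α : Type*} [TopologicalSpace α] {f : α → EReal} {s : Set α}
    (h : UpperSemicontinuousOn f s) (ε : ℝ) :
    UpperSemicontinuousOn (fun x => f x - (ε : EReal)) s := by
  intro x hx y hy
  filter_upwards [h x hx (y + ε) (ereal_sub_lt_iff.1 hy)] with x' hx'
  exact ereal_sub_lt_iff.2 hx'

lemma subharmonicOn'_sub_const {u : ℂ → EReal} {U : Set ℂ} (hu : SubharmonicOn' u U) (ε : ℝ) :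
    SubharmonicOn' (fun z => u z - (ε : EReal)) U := by
  obtain ⟨h1, h2, h3⟩ := hu
  refine ⟨uscOn_sub_const h1 ε, fun z hz => ereal_sub_lt_top (h2 z hz) ε, ?_⟩
  intro c r hr hU p hp z hz
  have key : ∀ ζ : ℂ, (((p + Polynomial.C (ε : ℂ)).eval ζ).re : EReal)
      = ((p.eval ζ).re : EReal) + (ε : EReal) := by
    intro ζ
    rw [← EReal.coe_add]
    norm_num [Polynomial.eval_add]
  have hp' : ∀ ζ ∈ sphere c r, u ζ ≤ (((p + Polynomial.C (ε : ℂ)).eval ζ).re : EReal) := by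
    intro ζ hζ
    rw [key]
    exact ereal_sub_le_iff.1 (hp ζ hζ)
  have h4 := h3 c r hr hU _ hp' z hz
  rw [key] at h4
  exact ereal_sub_le_iff.2 h4

lemma pshOn_const {κ : EReal} (hκ : κ < ⊤) :
    PshOn (fun _ => κ) (Set.univ : Set (EuclideanSpace ℂ (Fin m))) :=
  ⟨upperSemicontinuousOn_const, fun _ _ => hκ, fun _ _ _ => subharmonicOn'_const hκ _⟩

lemma minGrowth_zero : MinGrowth (fun _ : EuclideanSpace ℂ (Fin m) => (0 : EReal)) := by
  refine ⟨pshOn_const (by simp), 0, 1, fun z hz => ?_⟩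
  have h : (0:ℝ) ≤ Real.log ‖z‖ + 0 := by
    simpa using Real.log_nonneg hz
  calc (0:EReal) = ((0:ℝ):EReal) := by simp
    _ ≤ _ := EReal.coe_le_coe_iff.2 h

lemma exists_forall_le_of_usc {u : EuclideanSpace ℂ (Fin N) → EReal}
    (husc : UpperSemicontinuous u) (hlt : ∀ x, u x < ⊤) {s : Set (EuclideanSpace ℂ (Fin N))}
    (hs : IsCompact s) :
    ∃ M : ℝ, ∀ x ∈ s, u x ≤ (M : EReal) := by
  have hcover : s ⊆ ⋃ i : ℕ, u ⁻¹' Set.Iio ((i : ℝ) : EReal) := by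
    intro x _
    obtain ⟨y, hy1, -⟩ := EReal.lt_iff_exists_real_btwn.1 (hlt x)
    obtain ⟨i, hi⟩ := exists_nat_gt y
    refine Set.mem_iUnion.2 ⟨i, ?_⟩
    exact hy1.trans (by exact_mod_cast hi)
  obtain ⟨t, ht⟩ := hs.elim_finite_subcover _ (fun i : ℕ => husc.isOpen_preimage _) hcover
  refine ⟨(t.sup id : ℕ), fun x hx => ?_⟩
  obtain ⟨i, hit, hxi⟩ := Set.mem_iUnion₂.1 (ht hx)
  have hle : (i:ℝ) ≤ ((t.sup id : ℕ) : ℝ) := by exact_mod_cast Finset.le_sup (f := id) hit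
  exact le_trans hxi.le (EReal.coe_le_coe_iff.2 hle)

lemma pshOn_comp {u : EuclideanSpace ℂ (Fin N) → EReal} (hu : PshOn u Set.univ)
    (c₀ : EuclideanSpace ℂ (Fin N)) (L : EuclideanSpace ℂ (Fin k) → EuclideanSpace ℂ (Fin N))
    (hLadd : ∀ x y, L (x + y) = L x + L y) (hLsmul : ∀ (c : ℂ) x, L (c • x) = c • L x)
    (hLcont : Continuous L) :
    PshOn (fun x => u (c₀ + L x)) Set.univ := by
  have husc : UpperSemicontinuous u := upperSemicontinuousOn_univ_iff.1 hu.1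
  have h1 : UpperSemicontinuous fun x => u (c₀ + L x) :=
    upperSemicontinuous_iff_isOpen_preimage.2 fun y =>
      (husc.isOpen_preimage y).preimage (continuous_const.add hLcont)
  refine ⟨upperSemicontinuousOn_univ_iff.2 h1, fun z _ => hu.2.1 _ trivial, ?_⟩
  intro a b hb
  by_cases hLb : L b = 0
  · have heq : (fun w : ℂ => u (c₀ + L (a + w • b))) = fun _ => u (c₀ + L a) := by
      funext w; rw [hLadd, hLsmul, hLb, smul_zero, add_zero]
    show SubharmonicOn' (fun w : ℂ => u (c₀ + L (a + w • b))) _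
    rw [heq]
    exact subharmonicOn'_const (hu.2.1 _ trivial) _
  · have heq : (fun w : ℂ => u (c₀ + L (a + w • b))) = fun w => u ((c₀ + L a) + w • L b) := by
      funext w; rw [hLadd, hLsmul, add_assoc]
    show SubharmonicOn' (fun w : ℂ => u (c₀ + L (a + w • b))) _
    rw [heq]
    exact hu.2.2 (c₀ + L a) (L b) hLb

lemma minGrowth_comp_isometry {u : EuclideanSpace ℂ (Fin N) → EReal} (hu : MinGrowth u)
    (c₀ : EuclideanSpace ℂ (Fin N)) (L : EuclideanSpace ℂ (Fin k) → EuclideanSpace ℂ (Fin N))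
    (hLadd : ∀ x y, L (x + y) = L x + L y) (hLsmul : ∀ (c : ℂ) x, L (c • x) = c • L x)
    (hLnorm : ∀ x, ‖L x‖ = ‖x‖) :
    MinGrowth (fun x => u (c₀ + L x)) := by
  have hLsub : ∀ x y, L (x - y) = L x - L y := by
    intro x y
    have h : L (-y) = -L y := by
      rw [← neg_one_smul ℂ y, hLsmul, neg_one_smul]
    rw [sub_eq_add_neg, hLadd, h, sub_eq_add_neg]
  have hLcont : Continuous L := by
    refine (LipschitzWith.of_dist_le_mul (K := 1) fun x y => ?_).continuous
    have h := hLnorm (x - y)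
    rw [dist_eq_norm, dist_eq_norm, ← hLsub]
    simp [h]
  obtain ⟨hpsh, C, R₀, hC⟩ := hu
  refine ⟨pshOn_comp hpsh c₀ L hLadd hLsmul hLcont, C + Real.log 2,
    max (R₀ + ‖c₀‖) (‖c₀‖ + 1), fun x hx => ?_⟩
  have hx1 : ‖c₀‖ + 1 ≤ ‖x‖ := le_trans (le_max_right _ _) hx
  have hx2 : R₀ + ‖c₀‖ ≤ ‖x‖ := le_trans (le_max_left _ _) hx
  have hlow : ‖x‖ - ‖c₀‖ ≤ ‖c₀ + L x‖ := by
    have h1 : ‖L x‖ ≤ ‖c₀ + L x‖ + ‖c₀‖ := by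
      calc ‖L x‖ = ‖(c₀ + L x) - c₀‖ := by rw [add_sub_cancel_left]
        _ ≤ ‖c₀ + L x‖ + ‖c₀‖ := norm_sub_le _ _
    rw [← hLnorm x] ; linarith
  have hup : ‖c₀ + L x‖ ≤ ‖x‖ + ‖c₀‖ := by
    have := norm_add_le c₀ (L x)
    rw [hLnorm] at this; linarith
  have hApos : (1:ℝ) ≤ ‖c₀ + L x‖ := by linarith
  have h1 := hC (c₀ + L x) (by linarith)
  refine h1.trans ?_
  rw [EReal.coe_le_coe_iff]
  have hlog : Real.log ‖c₀ + L x‖ ≤ Real.log ‖x‖ + Real.log 2 := by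
    have hxpos : (0:ℝ) < ‖x‖ := by have := norm_nonneg c₀; linarith
    have h2 : ‖c₀ + L x‖ ≤ 2 * ‖x‖ := by have := norm_nonneg c₀; linarith
    calc Real.log ‖c₀ + L x‖ ≤ Real.log (2 * ‖x‖) :=
          Real.log_le_log (by linarith) h2
      _ = Real.log 2 + Real.log ‖x‖ := Real.log_mul (by norm_num) hxpos.ne'
      _ = Real.log ‖x‖ + Real.log 2 := by ring
  linarith

lemma minGrowth_comp_contraction {u : EuclideanSpace ℂ (Fin N) → EReal} (hu : MinGrowth u)
    (L : EuclideanSpace ℂ (Fin k) → EuclideanSpace ℂ (Fin N))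
    (hLadd : ∀ x y, L (x + y) = L x + L y) (hLsmul : ∀ (c : ℂ) x, L (c • x) = c • L x)
    (hLnorm : ∀ x, ‖L x‖ ≤ ‖x‖) :
    MinGrowth (fun x => u (L x)) := by
  have hLsub : ∀ x y, L (x - y) = L x - L y := by
    intro x y
    have h : L (-y) = -L y := by
      rw [← neg_one_smul ℂ y, hLsmul, neg_one_smul]
    rw [sub_eq_add_neg, hLadd, h, sub_eq_add_neg]
  have hLcont : Continuous L := by
    refine (LipschitzWith.of_dist_le_mul (K := 1) fun x y => ?_).continuous
    have h := hLnorm (x - y)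
    rw [dist_eq_norm, dist_eq_norm, ← hLsub]
    simpa using h
  obtain ⟨hpsh, C, R₀, hC⟩ := hu
  have husc : UpperSemicontinuous u := upperSemicontinuousOn_univ_iff.1 hpsh.1
  obtain ⟨M, hM⟩ := exists_forall_le_of_usc husc (fun x => hpsh.2.1 x trivial)
    (isCompact_closedBall (0 : EuclideanSpace ℂ (Fin N)) (max R₀ 1))
  have hpsh' : PshOn (fun x => u (L x)) Set.univ := by
    have := pshOn_comp hpsh 0 L hLadd hLsmul hLcont
    simpa only [zero_add] using this
  refine ⟨hpsh', max C 0 + max M 0, max (max R₀ 1) (Real.exp (max M 0)), fun x hx => ?_⟩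
  have hx1 : max R₀ 1 ≤ ‖x‖ := le_trans (le_max_left _ _) hx
  have hx2 : Real.exp (max M 0) ≤ ‖x‖ := le_trans (le_max_right _ _) hx
  have hxpos : (0:ℝ) < ‖x‖ := lt_of_lt_of_le (lt_of_lt_of_le one_pos (le_max_right R₀ 1)) hx1
  by_cases hc : max R₀ 1 ≤ ‖L x‖
  · have h1 := hC (L x) (le_trans (le_max_left _ _) hc)
    refine h1.trans ?_
    rw [EReal.coe_le_coe_iff]
    have hlog : Real.log ‖L x‖ ≤ Real.log ‖x‖ :=
      Real.log_le_log (lt_of_lt_of_le (lt_of_lt_of_le one_pos (le_max_right R₀ 1)) hc) (hLnorm x)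
    have hM0 : (0:ℝ) ≤ max M 0 := le_max_right _ _
    have hC0 : C ≤ max C 0 := le_max_left _ _
    linarith
  · push_neg at hc
    have h1 : u (L x) ≤ (M : EReal) :=
      hM (L x) (mem_closedBall_zero_iff.2 hc.le)
    refine h1.trans ?_
    rw [EReal.coe_le_coe_iff]
    have hlog : max M 0 ≤ Real.log ‖x‖ := by
      calc max M 0 = Real.log (Real.exp (max M 0)) := (Real.log_exp _).symm
        _ ≤ Real.log ‖x‖ := Real.log_le_log (Real.exp_pos _) hx2
    linarith [le_max_left M 0, le_max_right M 0, le_max_right C 0]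

lemma minGrowth_sub_const {u : EuclideanSpace ℂ (Fin m) → EReal} (hu : MinGrowth u) (ε : ℝ) :
    MinGrowth (fun x => u x - (ε : EReal)) := by
  obtain ⟨⟨h1, h2, h3⟩, C, R₀, hC⟩ := hu
  refine ⟨⟨uscOn_sub_const h1 ε, fun z hz => ereal_sub_lt_top (h2 z hz) ε,
    fun a b hb => subharmonicOn'_sub_const (h3 a b hb) ε⟩, C + |ε|, R₀, fun x hx => ?_⟩
  rw [ereal_sub_le_iff, ← EReal.coe_add]
  refine (hC x hx).trans (EReal.coe_le_coe_iff.2 ?_)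
  have := neg_abs_le ε; have := abs_nonneg ε
  linarith

lemma le_greenFn {E : Set (EuclideanSpace ℂ (Fin m))} {u : EuclideanSpace ℂ (Fin m) → EReal}
    (hu : MinGrowth u) (h0 : ∀ x ∈ E, u x ≤ 0) (z : EuclideanSpace ℂ (Fin m)) :
    u z ≤ greenFn E z :=
  le_sSup ⟨u, ⟨hu, h0⟩, rfl⟩

lemma greenFn_le {E : Set (EuclideanSpace ℂ (Fin m))} {z : EuclideanSpace ℂ (Fin m)} {b : EReal}
    (h : ∀ u, MinGrowth u → (∀ x ∈ E, u x ≤ 0) → u z ≤ b) : greenFn E z ≤ b :=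
  sSup_le (by rintro x ⟨u, ⟨h1, h2⟩, rfl⟩; exact h u h1 h2)

lemma greenFn_nonneg (E : Set (EuclideanSpace ℂ (Fin m))) (z : EuclideanSpace ℂ (Fin m)) :
    (0 : EReal) ≤ greenFn E z :=
  le_greenFn minGrowth_zero (fun _ _ => le_refl (0 : EReal)) z

lemma mem_prodSet {E : Set (EuclideanSpace ℂ (Fin m))} {F : Set (EuclideanSpace ℂ (Fin n))}
    (ζ : EuclideanSpace ℂ (Fin (m + n))) :
    ζ ∈ prodSet E F ↔ proj1 m n ζ ∈ E ∧ proj2 m n ζ ∈ F := Iff.rfl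

lemma iota_mem_prodSet {E : Set (EuclideanSpace ℂ (Fin m))} {F : Set (EuclideanSpace ℂ (Fin n))}
    {z : EuclideanSpace ℂ (Fin m)} {w : EuclideanSpace ℂ (Fin n)} :
    iotaP m n z w ∈ prodSet E F ↔ z ∈ E ∧ w ∈ F := by
  rw [mem_prodSet, proj1_iota, proj2_iota]

lemma slice_left_minGrowth {u : EuclideanSpace ℂ (Fin (m + n)) → EReal} (hu : MinGrowth u)
    (w₀ : EuclideanSpace ℂ (Fin n)) : MinGrowth (fun z => u (iotaP m n z w₀)) := by
  have heq : ∀ z, iotaP m n 0 w₀ + iotaP m n z 0 = iotaP m n z w₀ := by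
    intro z; rw [iota_add, zero_add, add_zero]
  have h := minGrowth_comp_isometry hu (iotaP m n 0 w₀) (fun z => iotaP m n z 0)
    (fun x y => by rw [iota_add, add_zero])
    (fun c x => by rw [iota_smul, smul_zero])
    (fun x => norm_iota_left x)
  simpa only [heq] using h

lemma slice_right_minGrowth {u : EuclideanSpace ℂ (Fin (m + n)) → EReal} (hu : MinGrowth u)
    (z₀ : EuclideanSpace ℂ (Fin m)) : MinGrowth (fun w => u (iotaP m n z₀ w)) := by
  have heq : ∀ w, iotaP m n z₀ 0 + iotaP m n 0 w = iotaP m n z₀ w := by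
    intro w; rw [iota_add, zero_add, add_zero]
  have h := minGrowth_comp_isometry hu (iotaP m n z₀ 0) (fun w => iotaP m n 0 w)
    (fun x y => by rw [iota_add, add_zero])
    (fun c x => by rw [iota_smul, smul_zero])
    (fun x => norm_iota_right x)
  simpa only [heq] using h

lemma ext_left_minGrowth {u : EuclideanSpace ℂ (Fin m) → EReal} (hu : MinGrowth u) :
    MinGrowth (fun ζ : EuclideanSpace ℂ (Fin (m + n)) => u (proj1 m n ζ)) :=
  minGrowth_comp_contraction hu (proj1 m n) (fun _ _ => rfl) (fun _ _ => PiLp.ext fun _ => by simp [proj1]) norm_proj1_le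

lemma ext_right_minGrowth {u : EuclideanSpace ℂ (Fin n) → EReal} (hu : MinGrowth u) :
    MinGrowth (fun ζ : EuclideanSpace ℂ (Fin (m + n)) => u (proj2 m n ζ)) :=
  minGrowth_comp_contraction hu (proj2 m n) (fun _ _ => rfl) (fun _ _ => PiLp.ext fun _ => by simp [proj2]) norm_proj2_le

lemma greenFn_prod_le {E : Set (EuclideanSpace ℂ (Fin m))} {F : Set (EuclideanSpace ℂ (Fin n))}
    {z : EuclideanSpace ℂ (Fin m)} {w : EuclideanSpace ℂ (Fin n)} {r ρ R ε : ℝ}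
    (hE : greenFn (E ∩ closedBall 0 r) z ≤ (ε : EReal))
    (hF : greenFn (F ∩ closedBall 0 ρ) w ≤ (ε : EReal))
    (hR : r + ρ ≤ R) :
    greenFn (prodSet E F ∩ closedBall 0 R) (iotaP m n z w) ≤ ((ε + ε : ℝ) : EReal) := by
  refine greenFn_le fun u hu h0 => ?_
  have step1 : ∀ w' ∈ F ∩ closedBall 0 ρ, u (iotaP m n z w') ≤ (ε : EReal) := by
    intro w' hw'
    have hg : MinGrowth (fun z' => u (iotaP m n z' w')) := slice_left_minGrowth hu w'
    have h0' : ∀ x ∈ E ∩ closedBall 0 r, u (iotaP m n x w') ≤ 0 := by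
      intro x hx
      refine h0 _ ⟨iota_mem_prodSet.2 ⟨hx.1, hw'.1⟩, mem_closedBall_zero_iff.2 ?_⟩
      have h1 := norm_iota_le x w'
      have h2 := mem_closedBall_zero_iff.1 hx.2
      have h3 := mem_closedBall_zero_iff.1 hw'.2
      linarith
    exact le_trans (le_greenFn hg h0' z) hE
  have hg2 : MinGrowth (fun w' => u (iotaP m n z w') - (ε : EReal)) :=
    minGrowth_sub_const (slice_right_minGrowth hu z) ε
  have h0'' : ∀ w' ∈ F ∩ closedBall 0 ρ, u (iotaP m n z w') - (ε : EReal) ≤ 0 := by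
    intro w' hw'
    rw [ereal_sub_le_iff, zero_add]
    exact step1 w' hw'
  have h5 : u (iotaP m n z w) - (ε : EReal) ≤ (ε : EReal) :=
    le_trans (le_greenFn hg2 h0'' w) hF
  rw [EReal.coe_add]
  exact ereal_sub_le_iff.1 h5

lemma greenFn_le_prod_left {E : Set (EuclideanSpace ℂ (Fin m))} {F : Set (EuclideanSpace ℂ (Fin n))}
    {R : ℝ} (z : EuclideanSpace ℂ (Fin m)) (w : EuclideanSpace ℂ (Fin n)) :
    greenFn (E ∩ closedBall 0 R) z ≤ greenFn (prodSet E F ∩ closedBall 0 R) (iotaP m n z w) := by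
  refine greenFn_le fun u hu h0 => ?_
  have hg : MinGrowth (fun ζ : EuclideanSpace ℂ (Fin (m + n)) => u (proj1 m n ζ)) :=
    ext_left_minGrowth hu
  have h0' : ∀ ζ ∈ prodSet E F ∩ closedBall 0 R, u (proj1 m n ζ) ≤ 0 := by
    intro ζ hζ
    refine h0 _ ⟨hζ.1.1, mem_closedBall_zero_iff.2 ?_⟩
    exact le_trans (norm_proj1_le ζ) (mem_closedBall_zero_iff.1 hζ.2)
  have := le_greenFn hg h0' (iotaP m n z w)
  rwa [proj1_iota] at this

lemma greenFn_le_prod_right {E : Set (EuclideanSpace ℂ (Fin m))} {F : Set (EuclideanSpace ℂ (Fin n))}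
    {R : ℝ} (z : EuclideanSpace ℂ (Fin m)) (w : EuclideanSpace ℂ (Fin n)) :
    greenFn (F ∩ closedBall 0 R) w ≤ greenFn (prodSet E F ∩ closedBall 0 R) (iotaP m n z w) := by
  refine greenFn_le fun u hu h0 => ?_
  have hg : MinGrowth (fun ζ : EuclideanSpace ℂ (Fin (m + n)) => u (proj2 m n ζ)) :=
    ext_right_minGrowth hu
  have h0' : ∀ ζ ∈ prodSet E F ∩ closedBall 0 R, u (proj2 m n ζ) ≤ 0 := by
    intro ζ hζ
    refine h0 _ ⟨hζ.1.2, mem_closedBall_zero_iff.2 ?_⟩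
    exact le_trans (norm_proj2_le ζ) (mem_closedBall_zero_iff.1 hζ.2)
  have := le_greenFn hg h0' (iotaP m n z w)
  rwa [proj2_iota] at this

end Aux

end NTI

/-- **Lemma 1 b).** `E × F ⊆ ℂ^{m+n}` is non-thin at `∞` iff `E ⊆ ℂ^m` and `F ⊆ ℂ^n`
are both non-thin at `∞`. -/
theorem nonthinAtInfty_prod_iff {m n : ℕ}
    (E : Set (EuclideanSpace ℂ (Fin m))) (F : Set (EuclideanSpace ℂ (Fin n))) :
    NonthinAtInfty (prodSet E F) ↔ NonthinAtInfty E ∧ NonthinAtInfty F := by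
  constructor
  · intro H
    refine ⟨fun z => ?_, fun w => ?_⟩
    · exact tendsto_of_tendsto_of_tendsto_of_le_of_le tendsto_const_nhds (H (NTI.iotaP m n z 0))
        (fun R => NTI.greenFn_nonneg _ _) (fun R => NTI.greenFn_le_prod_left z 0)
    · exact tendsto_of_tendsto_of_tendsto_of_le_of_le tendsto_const_nhds (H (NTI.iotaP m n 0 w))
        (fun R => NTI.greenFn_nonneg _ _) (fun R => NTI.greenFn_le_prod_right 0 w)
  · rintro ⟨hE, hF⟩ ζ
    refine tendsto_order.2 ⟨fun a ha => ?_, fun a ha => ?_⟩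
    · exact Eventually.of_forall fun R => lt_of_lt_of_le ha (NTI.greenFn_nonneg _ _)
    · obtain ⟨ε, hε0, hεa⟩ : ∃ ε : ℝ, 0 < ε ∧ ((ε + ε : ℝ) : EReal) < a := by
        induction a using EReal.rec with
        | bot => exact absurd ha (by simp)
        | coe t =>
          have ht : (0:ℝ) < t := by exact_mod_cast ha
          refine ⟨t / 3, by linarith, ?_⟩
          have : t / 3 + t / 3 < t := by linarith
          exact_mod_cast this
        | top => exact ⟨1, one_pos, by exact_mod_cast EReal.coe_lt_top (1 + 1 : ℝ)⟩
      have hε : (0 : EReal) < (ε : EReal) := by exact_mod_cast hε0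
      obtain ⟨r, hr⟩ := ((hE (NTI.proj1 m n ζ)).eventually_lt_const hε).exists
      obtain ⟨ρ, hρ⟩ := ((hF (NTI.proj2 m n ζ)).eventually_lt_const hε).exists
      filter_upwards [eventually_ge_atTop (r + ρ)] with R hR
      have h := NTI.greenFn_prod_le hr.le hρ.le hR (E := E) (F := F)
      rw [NTI.iota_proj] at h
      exact lt_of_le_of_lt h hεa

end
end

section
/- Let Δ be a collection of complex lines L in ℂ^m whose union equals ℂ^m. Let E be a closed subset of ℂ^m such that for each L ∈ Δ, the set E ∩ L, considered as a subset of the one-dimensional complex line L (with an affine coordinate w on L such that the coordinates of ℂ^m restricted to L are linear functions of w), is non-thin at ∞ in L ≅ ℂ. Then E is non-thin at ∞ as a subset of ℂ^m. -/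
open Filter Metric

noncomputable section

/-- Subharmonic functions on `ℂ` of minimal growth: `u(z) - log|z| ≤ O(1)` as `|z| → ∞`. -/
def MinGrowth1 (u : ℂ → EReal) : Prop :=
  SubharmonicOn' u Set.univ ∧ ∃ C R₀ : ℝ, ∀ z : ℂ, R₀ ≤ ‖z‖ → u z ≤ ((Real.log ‖z‖ + C : ℝ) : EReal)

/-- One-variable Green function with pole at infinity. -/
def greenFn1 (E : Set ℂ) (z : ℂ) : EReal :=
  sSup ((fun u => u z) '' {u | MinGrowth1 u ∧ ∀ x ∈ E, u x ≤ 0})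

/-- `E ⊆ ℂ` is non-thin at `∞` (Green-function formulation). -/
def NonthinAtInfty1 (E : Set ℂ) : Prop :=
  ∀ z : ℂ, Tendsto (fun R : ℝ => greenFn1 (E ∩ closedBall 0 R) z) atTop (nhds (0 : EReal))

/-- `F ⊆ ℂ` is thin at a point `a`: either `a` is not a limit point of `F`, or some
function subharmonic near `a` satisfies `limsup_{z→a, z ∈ F \ {a}} u(z) < u(a)`. -/
def ThinAt (F : Set ℂ) (a : ℂ) : Prop :=
  a ∉ closure (F \ {a}) ∨
    ∃ U : Set ℂ, IsOpen U ∧ a ∈ U ∧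
      ∃ u : ℂ → EReal, SubharmonicOn' u U ∧
        Filter.limsup u (nhdsWithin a (F \ {a})) < u a


lemma zero_subharmonic (U : Set ℂ) : SubharmonicOn' (fun _ => (0:EReal)) U := by
  refine ⟨upperSemicontinuousOn_const, fun z _ => by norm_num, ?_⟩
  intro c r hr _ p hp z hz
  have hd : DiffContOnCl ℂ (fun z => Complex.exp (-(p.eval z))) (ball c r) :=
    (Complex.differentiable_exp.comp (p.differentiable.neg)).diffContOnCl
  have hb : Bornology.IsBounded (ball c r) := isBounded_ball
  have hfr : ∀ x ∈ frontier (ball c r), ‖Complex.exp (-(p.eval x))‖ ≤ 1 := by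
    intro x hx
    rw [frontier_ball c hr.ne'] at hx
    have h0 : (0:ℝ) ≤ (p.eval x).re := by
      have h : ((0:ℝ):EReal) ≤ ((p.eval x).re : EReal) := hp x hx
      exact_mod_cast h
    simp only [Complex.norm_exp, Complex.neg_re]
    exact Real.exp_le_one_iff.mpr (by linarith)
  have hcl : z ∈ closure (ball c r) := by rwa [closure_ball c hr.ne']
  have := Complex.norm_le_of_forall_mem_frontier_norm_le hb hd hfr hcl
  simp only [Complex.norm_exp, Complex.neg_re] at this
  have h0 : (0:ℝ) ≤ (p.eval z).re := by
    have := Real.exp_le_one_iff.mp this; linarith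
  show (0:EReal) ≤ _
  exact_mod_cast h0

lemma zero_minGrowth {m : ℕ} : MinGrowth (fun _ : EuclideanSpace ℂ (Fin m) => (0:EReal)) := by
  refine ⟨⟨upperSemicontinuousOn_const, fun z _ => by norm_num, ?_⟩, 0, 1, ?_⟩
  · intro a b hb
    exact zero_subharmonic _
  · intro z hz
    have h1 : (0:ℝ) ≤ Real.log ‖z‖ + 0 := by
      simpa using Real.log_nonneg hz
    show ((0:ℝ):EReal) ≤ _
    exact_mod_cast h1

lemma greenFn_nonneg {m : ℕ} (F : Set (EuclideanSpace ℂ (Fin m)))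
    (z : EuclideanSpace ℂ (Fin m)) : (0:EReal) ≤ greenFn F z := by
  apply le_sSup
  exact ⟨fun _ => (0:EReal), ⟨zero_minGrowth, fun x _ => le_refl _⟩, rfl⟩

lemma minGrowth1_restrict {m : ℕ} {u : EuclideanSpace ℂ (Fin m) → EReal}
    (hu : MinGrowth u) (a b : EuclideanSpace ℂ (Fin m)) (hb : b ≠ 0) :
    MinGrowth1 (fun w => u (a + w • b)) := by
  obtain ⟨⟨_, _, hline⟩, C, R₀, hgrowth⟩ := hu
  have hbpos : 0 < ‖b‖ := norm_pos_iff.mpr hb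
  constructor
  · have h := hline a b hb
    have hset : {w : ℂ | a + w • b ∈ (Set.univ : Set (EuclideanSpace ℂ (Fin m)))} = Set.univ := by
      ext w; simp
    rwa [hset] at h
  · refine ⟨C + Real.log (‖a‖ + ‖b‖), max 1 ((max R₀ 1 + ‖a‖) / ‖b‖), ?_⟩
    intro w hw
    have hw1 : (1:ℝ) ≤ ‖w‖ := le_trans (le_max_left _ _) hw
    have hw2 : (max R₀ 1 + ‖a‖) / ‖b‖ ≤ ‖w‖ := le_trans (le_max_right _ _) hw
    have hwb : max R₀ 1 + ‖a‖ ≤ ‖w‖ * ‖b‖ := by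
      rw [div_le_iff₀ hbpos] at hw2; linarith
    have hlow : max R₀ 1 ≤ ‖a + w • b‖ := by
      have : ‖w • b‖ - ‖a‖ ≤ ‖a + w • b‖ := by
        have := norm_sub_norm_le (w • b) (-a)
        simp only [norm_neg] at this
        calc ‖w • b‖ - ‖a‖ ≤ ‖w • b - -a‖ := this
          _ = ‖a + w • b‖ := by rw [sub_neg_eq_add, add_comm]
      rw [norm_smul] at this
      linarith
    have hR₀ : R₀ ≤ ‖a + w • b‖ := le_trans (le_max_left _ _) hlow
    have hpos : (1:ℝ) ≤ ‖a + w • b‖ := le_trans (le_max_right _ _) hlow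
    have hup : ‖a + w • b‖ ≤ ‖w‖ * (‖a‖ + ‖b‖) := by
      have h1 : ‖a + w • b‖ ≤ ‖a‖ + ‖w‖ * ‖b‖ := by
        calc ‖a + w • b‖ ≤ ‖a‖ + ‖w • b‖ := norm_add_le _ _
          _ = ‖a‖ + ‖w‖ * ‖b‖ := by rw [norm_smul]
      nlinarith [norm_nonneg (a : EuclideanSpace ℂ (Fin m))]
    have hlog : Real.log ‖a + w • b‖ ≤ Real.log ‖w‖ + Real.log (‖a‖ + ‖b‖) := by
      calc Real.log ‖a + w • b‖ ≤ Real.log (‖w‖ * (‖a‖ + ‖b‖)) :=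
            Real.log_le_log (by linarith) hup
        _ = Real.log ‖w‖ + Real.log (‖a‖ + ‖b‖) :=
            Real.log_mul (by linarith) (by positivity)
    calc u (a + w • b) ≤ ((Real.log ‖a + w • b‖ + C : ℝ) : EReal) := hgrowth _ hR₀
      _ ≤ ((Real.log ‖w‖ + (C + Real.log (‖a‖ + ‖b‖)) : ℝ) : EReal) := by
          exact_mod_cast (by linarith : Real.log ‖a + w • b‖ + C ≤
            Real.log ‖w‖ + (C + Real.log (‖a‖ + ‖b‖)))

lemma greenFn_le_line {m : ℕ} (E : Set (EuclideanSpace ℂ (Fin m)))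
    (a b : EuclideanSpace ℂ (Fin m)) (hb : b ≠ 0) (w₀ : ℂ) (r R : ℝ) (hr : 0 ≤ r)
    (hR : ‖a‖ + r * ‖b‖ ≤ R) :
    greenFn (E ∩ closedBall 0 R) (a + w₀ • b) ≤
      greenFn1 ({w : ℂ | a + w • b ∈ E} ∩ closedBall 0 r) w₀ := by
  apply sSup_le
  rintro t ⟨u, ⟨hu, hu0⟩, rfl⟩
  apply le_sSup
  refine ⟨fun w => u (a + w • b), ⟨minGrowth1_restrict hu a b hb, ?_⟩, rfl⟩
  rintro w ⟨hwE, hwr⟩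
  apply hu0
  refine ⟨hwE, ?_⟩
  simp only [mem_closedBall, dist_zero_right] at hwr ⊢
  calc ‖a + w • b‖ ≤ ‖a‖ + ‖w‖ * ‖b‖ := by
        calc ‖a + w • b‖ ≤ ‖a‖ + ‖w • b‖ := norm_add_le _ _
          _ = ‖a‖ + ‖w‖ * ‖b‖ := by rw [norm_smul]
    _ ≤ ‖a‖ + r * ‖b‖ := by nlinarith [norm_nonneg b]
    _ ≤ R := hR

/-- **Remark 1.** Let `Δ` be a family of complex lines (parametrized affinely as
`w ↦ a + w • b`, `b ≠ 0`) covering `ℂ^m`.  If `E` is closed and for each line of `Δ`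
the trace `{w : ℂ | a + w • b ∈ E}` is non-thin at `∞` in `ℂ`, then `E` is non-thin
at `∞` in `ℂ^m`. -/
theorem nonthinAtInfty_of_lines {m : ℕ}
    (E : Set (EuclideanSpace ℂ (Fin m))) (hE : IsClosed E)
    (Δ : Set (EuclideanSpace ℂ (Fin m) × EuclideanSpace ℂ (Fin m)))
    (hΔ : ∀ p ∈ Δ, p.2 ≠ 0)
    (hcover : ∀ z : EuclideanSpace ℂ (Fin m), ∃ p ∈ Δ, ∃ w : ℂ, z = p.1 + w • p.2)
    (hlines : ∀ p ∈ Δ, NonthinAtInfty1 {w : ℂ | p.1 + w • p.2 ∈ E}) :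
    NonthinAtInfty E := by
  intro z
  obtain ⟨p, hp, w₀, hz⟩ := hcover z
  have hb := hΔ p hp
  set a := p.1
  set b := p.2
  have hbpos : 0 < ‖b‖ := norm_pos_iff.mpr hb
  have hlim := hlines p hp w₀
  have hrt : Tendsto (fun R : ℝ => (R - ‖a‖) / ‖b‖) atTop atTop := by
    apply Tendsto.atTop_div_const hbpos
    exact tendsto_atTop_add_const_right _ _ tendsto_id
  have hcomp : Tendsto (fun R : ℝ =>
      greenFn1 ({w : ℂ | a + w • b ∈ E} ∩ closedBall 0 ((R - ‖a‖) / ‖b‖)) w₀)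
      atTop (nhds (0:EReal)) := hlim.comp hrt
  refine tendsto_of_tendsto_of_tendsto_of_le_of_le' tendsto_const_nhds hcomp ?_ ?_
  · exact Eventually.of_forall fun R => greenFn_nonneg _ _
  · filter_upwards [eventually_ge_atTop ‖a‖] with R hRa
    rw [hz]
    apply greenFn_le_line E a b hb w₀ _ R
    · exact div_nonneg (by linarith) hbpos.le
    · rw [div_mul_cancel₀ _ hbpos.ne']
      linarith


end
end
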